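/- If B is a finite q⁺_n-crystal, then its character f := ch(B) = Σ_{b∈B} x_1^{wt(b)_1}⋯x_n^{wt(b)_n} ∈ ℤ[x_1,…,x_n] lies in the ring Sym_Q(x_1,…,x_n); explicitly: f is a symmetric polynomial; if n ≥ 2 then the substitution f(x_1, −x_1, x_3, …, x_n) lies in ℤ[x_3,…,x_n]; and f − f(0, x_2, …, x_n) lies in the ideal 2x_1·ℤ[x_1,…,x_n]. -/

import Mathlib

namespace QPaper

abbrev Std := ℕ × Bool
abbrev PLetter := ℤ × Bool
abbrev NLet := ℕ × Bool
abbrev Tab := ℕ × ℕ → Option NLet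
abbrev ZTab := ℕ × ℕ → Option PLetter

/-- iterate a partial operator -/
def iterO {B : Type} (g : B → Option B) : ℕ → B → Option B
  | 0, b => some b
  | k + 1, b => (iterO g k b).bind g

/-- Raw data of a crystal with operators `e_i, f_i` (`1 ≤ i ≤ n-1`),
`e_1bar, f_1bar`, `e_0, f_0`, and a weight map with coordinates indexed `1,…,n`. -/
structure Crystal (n : ℕ) (B : Type) where
  wt : B → ℕ → ℤ
  e : ℕ → B → Option B
  f : ℕ → B → Option B
  ebar : B → Option B
  fbar : B → Option B
  e0 : B → Option B
  f0 : B → Option B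

namespace Crystal

variable {n : ℕ} {B B' B'' : Type}

noncomputable def eps (C : Crystal n B) (i : ℕ) (b : B) : ℕ := sSup {k | iterO (C.e i) k b ≠ none}
noncomputable def phi (C : Crystal n B) (i : ℕ) (b : B) : ℕ := sSup {k | iterO (C.f i) k b ≠ none}
noncomputable def epsBar (C : Crystal n B) (b : B) : ℕ := sSup {k | iterO C.ebar k b ≠ none}
noncomputable def phiBar (C : Crystal n B) (b : B) : ℕ := sSup {k | iterO C.fbar k b ≠ none}
noncomputable def eps0 (C : Crystal n B) (b : B) : ℕ := sSup {k | iterO C.e0 k b ≠ none}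
noncomputable def phi0 (C : Crystal n B) (b : B) : ℕ := sSup {k | iterO C.f0 k b ≠ none}

/-- The `gl_n`-crystal axioms (S1)-(S2). -/
structure IsGL (C : Crystal n B) : Prop where
  wt_zero : ∀ b i, i = 0 ∨ n < i → C.wt b i = 0
  e_range : ∀ i b, i = 0 ∨ n ≤ i → C.e i b = none
  f_range : ∀ i b, i = 0 ∨ n ≤ i → C.f i b = none
  e_bdd : ∀ i b, ∃ N, iterO (C.e i) N b = none
  f_bdd : ∀ i b, ∃ N, iterO (C.f i) N b = none
  ef_iff : ∀ i, 1 ≤ i → i ≤ n - 1 → ∀ b c, C.e i b = some c ↔ C.f i c = some b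
  e_wt : ∀ i, 1 ≤ i → i ≤ n - 1 → ∀ b c, C.e i b = some c →
    ∀ j, C.wt c j = C.wt b j + (if j = i then 1 else 0) - (if j = i + 1 then 1 else 0)
  string_eq : ∀ i, 1 ≤ i → i ≤ n - 1 → ∀ b,
    (C.phi i b : ℤ) - (C.eps i b : ℤ) = C.wt b i - C.wt b (i + 1)

/-- The `q_n`-crystal axioms (P1)-(P3) on top of the `gl_n` ones. -/
structure IsQ (C : Crystal n B) extends IsGL C : Prop where
  wt_nonneg : ∀ b i, 0 ≤ C.wt b i
  ebar_bdd : ∀ b, ∃ N, iterO C.ebar N b = none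
  fbar_bdd : ∀ b, ∃ N, iterO C.fbar N b = none
  bar_iff : ∀ b c, C.ebar b = some c ↔ C.fbar c = some b
  ebar_wt : 2 ≤ n → ∀ b c, C.ebar b = some c →
    (∀ j, C.wt c j = C.wt b j + (if j = 1 then 1 else 0) - (if j = 2 then 1 else 0)) ∧
    (∀ i, 3 ≤ i → i ≤ n - 1 → C.eps i b = C.eps i c ∧ C.phi i b = C.phi i c)
  bar_comm : 2 ≤ n → ∀ i, 3 ≤ i → i ≤ n - 1 → ∀ b,
    (C.e i b).bind C.ebar = (C.ebar b).bind (C.e i) ∧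
    (C.e i b).bind C.fbar = (C.fbar b).bind (C.e i) ∧
    (C.f i b).bind C.ebar = (C.ebar b).bind (C.f i) ∧
    (C.f i b).bind C.fbar = (C.fbar b).bind (C.f i)
  bar_string : 2 ≤ n → ∀ b,
    C.epsBar b + C.phiBar b = (if C.wt b 1 = 0 ∧ C.wt b 2 = 0 then 0 else 1)
  bar_none : n < 2 → ∀ b, C.ebar b = none ∧ C.fbar b = none

/-- The `q⁺_n`-crystal axioms (Q1)-(Q3) on top of the `q_n` ones. -/
structure IsQPlus (C : Crystal n B) extends IsQ C : Prop where
  e0_bdd : ∀ b, ∃ N, iterO C.e0 N b = none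
  f0_bdd : ∀ b, ∃ N, iterO C.f0 N b = none
  zero_iff : ∀ b c, C.e0 b = some c ↔ C.f0 c = some b
  e0_wt : ∀ b c, C.e0 b = some c →
    (∀ j, C.wt c j = C.wt b j) ∧
    (∀ i, 1 ≤ i → i ≤ n - 1 → C.eps i b = C.eps i c ∧ C.phi i b = C.phi i c) ∧
    (C.epsBar b = C.epsBar c ∧ C.phiBar b = C.phiBar c)
  zero_comm : ∀ i, 2 ≤ i → i ≤ n - 1 → ∀ b,
    (C.e i b).bind C.e0 = (C.e0 b).bind (C.e i) ∧
    (C.e i b).bind C.f0 = (C.f0 b).bind (C.e i) ∧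
    (C.f i b).bind C.e0 = (C.e0 b).bind (C.f i) ∧
    (C.f i b).bind C.f0 = (C.f0 b).bind (C.f i)
  zero_string : ∀ b, C.eps0 b + C.phi0 b = (if C.wt b 1 = 0 then 0 else 1)

/-- The standard `q⁺_n`-crystal `𝔹⁺_n` on letters `(k, primed?)`, `1 ≤ k ≤ n`. -/
def stdC (n : ℕ) : Crystal n Std where
  wt := fun l j => if j = l.1 ∧ 1 ≤ l.1 ∧ l.1 ≤ n then 1 else 0
  e := fun i l => if 1 ≤ i ∧ i ≤ n - 1 ∧ l.1 = i + 1 then some (i, l.2) else none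
  f := fun i l => if 1 ≤ i ∧ i ≤ n - 1 ∧ l.1 = i then some (i + 1, l.2) else none
  ebar := fun l => if 2 ≤ n ∧ l.1 = 2 then some (1, l.2) else none
  fbar := fun l => if 2 ≤ n ∧ l.1 = 1 then some (2, l.2) else none
  e0 := fun l => if 1 ≤ n ∧ l = (1, true) then some (1, false) else none
  f0 := fun l => if 1 ≤ n ∧ l = (1, false) then some (1, true) else none

/-- The one-element crystal of weight `0`. -/
def unitC (n : ℕ) : Crystal n PUnit where
  wt := fun _ _ => 0
  e := fun _ _ => none
  f := fun _ _ => none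
  ebar := fun _ => none
  fbar := fun _ => none
  e0 := fun _ => none
  f0 := fun _ => none

/-- The `q⁺_n`-tensor product of two crystals (anti-Kashiwara convention). -/
noncomputable def tensor (C : Crystal n B) (D : Crystal n B') : Crystal n (B × B') where
  wt := fun x j => C.wt x.1 j + D.wt x.2 j
  e := fun i x =>
    if C.eps i x.1 ≤ D.phi i x.2 then (D.e i x.2).map (fun c => (x.1, c))
    else (C.e i x.1).map (fun b => (b, x.2))
  f := fun i x =>
    if C.eps i x.1 < D.phi i x.2 then (D.f i x.2).map (fun c => (x.1, c))
    else (C.f i x.1).map (fun b => (b, x.2))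
  e0 := fun x =>
    if C.wt x.1 1 ≠ 0 then (C.e0 x.1).map (fun b => (b, x.2))
    else (D.e0 x.2).map (fun c => (x.1, c))
  f0 := fun x =>
    if C.wt x.1 1 ≠ 0 then (C.f0 x.1).map (fun b => (b, x.2))
    else (D.f0 x.2).map (fun c => (x.1, c))
  ebar := fun x =>
    if C.wt x.1 1 = 0 ∧ C.wt x.1 2 = 0 then (D.ebar x.2).map (fun c => (x.1, c))
    else if h : C.wt x.1 1 = 0 ∧ ((C.ebar x.1).bind C.f0).isSome ∧ (D.e0 x.2).isSome then
      some (((C.ebar x.1).bind C.f0).get h.2.1, (D.e0 x.2).get h.2.2)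
    else if h : C.wt x.1 1 = 0 ∧ ((C.ebar x.1).bind C.e0).isSome ∧ (D.f0 x.2).isSome then
      some (((C.ebar x.1).bind C.e0).get h.2.1, (D.f0 x.2).get h.2.2)
    else (C.ebar x.1).map (fun b => (b, x.2))
  fbar := fun x =>
    if C.wt x.1 1 = 0 ∧ C.wt x.1 2 = 0 then (D.fbar x.2).map (fun c => (x.1, c))
    else if h : C.wt x.1 1 = 1 ∧ ((C.f0 x.1).bind C.fbar).isSome ∧ (D.e0 x.2).isSome then
      some (((C.f0 x.1).bind C.fbar).get h.2.1, (D.e0 x.2).get h.2.2)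
    else if h : C.wt x.1 1 = 1 ∧ ((C.e0 x.1).bind C.fbar).isSome ∧ (D.f0 x.2).isSome then
      some (((C.e0 x.1).bind C.fbar).get h.2.1, (D.f0 x.2).get h.2.2)
    else (C.fbar x.1).map (fun b => (b, x.2))

/-- Underlying type of the `m`-th tensor power of the standard crystal. -/
def PowT : ℕ → Type
  | 0 => PUnit
  | m + 1 => PowT m × Std

/-- The `m`-th `q⁺_n`-tensor power `(𝔹⁺_n)^{⊗m}`. -/
noncomputable def powC (n : ℕ) : (m : ℕ) → Crystal n (PowT m)
  | 0 => unitC n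
  | m + 1 => tensor (powC n m) (stdC n)

/-- One edge of the crystal graph. -/
def step (C : Crystal n B) (b c : B) : Prop :=
  (∃ i, C.f i b = some c) ∨ C.fbar b = some c ∨ C.f0 b = some c

/-- Weak connectivity in the crystal graph. -/
def joined (C : Crystal n B) : B → B → Prop :=
  Relation.ReflTransGen (fun b c => step C b c ∨ step C c b)

/-- Weakly connected component (full subcrystal) through `b`. -/
def component (C : Crystal n B) (b : B) : Set B := {c | joined C b c}

def mapsAgree (C : Crystal n B) (D : Crystal n B') (φ : B → B') (x : B) : Prop :=
  (∀ j, D.wt (φ x) j = C.wt x j) ∧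
  (∀ i, (C.e i x).map φ = D.e i (φ x)) ∧
  (∀ i, (C.f i x).map φ = D.f i (φ x)) ∧
  ((C.ebar x).map φ = D.ebar (φ x)) ∧
  ((C.fbar x).map φ = D.fbar (φ x)) ∧
  ((C.e0 x).map φ = D.e0 (φ x)) ∧
  ((C.f0 x).map φ = D.f0 (φ x))

/-- `S ⊆ B` and `T ⊆ B'` are isomorphic as (sub)crystals. -/
def IsIsoOn (C : Crystal n B) (D : Crystal n B') (S : Set B) (T : Set B') : Prop :=
  ∃ φ : B → B', Set.BijOn φ S T ∧ ∀ x ∈ S, mapsAgree C D φ x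

/-- `φ` is an isomorphism of crystals. -/
def IsIso (C : Crystal n B) (D : Crystal n B') (φ : B → B') : Prop :=
  Function.Bijective φ ∧ ∀ x, mapsAgree C D φ x

/-- A quasi-isomorphism of crystals: restricts to an isomorphism on every full subcrystal. -/
def IsQuasiIso (C : Crystal n B) (D : Crystal n B') (ψ : B → B') : Prop :=
  ∀ b : B, ψ '' component C b = component D (ψ b) ∧
    Set.InjOn ψ (component C b) ∧
    ∀ x ∈ component C b, mapsAgree C D ψ x

/-- Normality for `q⁺_n`-crystals. -/
def IsNormal (C : Crystal n B) : Prop :=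
  IsQPlus C ∧ ∀ b : B, ∃ (m : ℕ) (x : PowT m),
    IsIsoOn C (powC n m) (component C b) (component (powC n m) x)

/-- The string-reversing involution `σ_i` from equation (3.3). -/
noncomputable def sigma (C : Crystal n B) (i : ℕ) (b : B) : B :=
  if C.eps i b ≤ C.phi i b then (iterO (C.f i) (C.phi i b - C.eps i b) b).getD b
  else (iterO (C.e i) (C.eps i b - C.phi i b) b).getD b

/-- The involution `σ_0`. -/
noncomputable def sigma0 (C : Crystal n B) (b : B) : B :=
  (C.e0 b).getD ((C.f0 b).getD b)

/-- `σ_k ⋯ σ_2 σ_1` (applying `σ_1` first). -/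
noncomputable def sigmaDown (C : Crystal n B) : ℕ → B → B
  | 0 => id
  | k + 1 => fun b => C.sigma (k + 1) (C.sigmaDown k b)

/-- `σ_1 σ_2 ⋯ σ_k` (applying `σ_k` first). -/
noncomputable def sigmaUp (C : Crystal n B) : ℕ → B → B
  | 0 => id
  | k + 1 => fun b => C.sigmaUp k (C.sigma (k + 1) b)

noncomputable def sigmaW0Aux (C : Crystal n B) : ℕ → B → B
  | 0 => id
  | k + 1 => fun b => C.sigmaW0Aux k (C.sigmaDown (k + 1) b)

/-- `σ_{w_0} = (σ_1)(σ_2σ_1)⋯(σ_{n-1}⋯σ_2σ_1)`. -/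
noncomputable def sigmaW0 (C : Crystal n B) : B → B := C.sigmaW0Aux (n - 1)

noncomputable def sigmaW0InvAux (C : Crystal n B) : ℕ → B → B
  | 0 => id
  | k + 1 => fun b => C.sigmaUp (k + 1) (C.sigmaW0InvAux k b)

/-- The inverse `σ_{w_0}^{-1}`. -/
noncomputable def sigmaW0Inv (C : Crystal n B) : B → B := C.sigmaW0InvAux (n - 1)

/-- `σ_k ⋯ σ_1 σ_0` (applying `σ_0` first). -/
noncomputable def sigmaDown0 (C : Crystal n B) : ℕ → B → B
  | 0 => C.sigma0
  | k + 1 => fun b => C.sigma (k + 1) (C.sigmaDown0 k b)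

noncomputable def sigmaW0PlusAux (C : Crystal n B) : ℕ → B → B
  | 0 => id
  | k + 1 => fun b => C.sigmaW0PlusAux k (C.sigmaDown0 k b)

/-- `σ_{w_0^+} = (σ_0)(σ_1σ_0)(σ_2σ_1σ_0)⋯(σ_{n-1}⋯σ_1σ_0)`. -/
noncomputable def sigmaW0Plus (C : Crystal n B) : B → B := C.sigmaW0PlusAux n

/-- The operators `e_{ī}` for `1 ≤ i ≤ n-1`, with `e_{1̄} = ebar` and
`e_{ī} = σ_{i-1} σ_i e_{\overline{i-1}} σ_i σ_{i-1}`. -/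
noncomputable def eBarIdx (C : Crystal n B) : ℕ → B → Option B
  | 0, _ => none
  | 1, b => C.ebar b
  | k + 2, b =>
    (C.eBarIdx (k + 1) (C.sigma (k + 2) (C.sigma (k + 1) b))).map
      (fun c => C.sigma (k + 1) (C.sigma (k + 2) c))

/-- The operators `f_{ī}`. -/
noncomputable def fBarIdx (C : Crystal n B) : ℕ → B → Option B
  | 0, _ => none
  | 1, b => C.fbar b
  | k + 2, b =>
    (C.fBarIdx (k + 1) (C.sigma (k + 2) (C.sigma (k + 1) b))).map
      (fun c => C.sigma (k + 1) (C.sigma (k + 2) c))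

/-- `e_{ī′} = σ_{w_0} f_{\overline{n-i}} σ_{w_0}^{-1}`. -/
noncomputable def eBarPrime (C : Crystal n B) (i : ℕ) (b : B) : Option B :=
  (C.fBarIdx (n - i) (C.sigmaW0Inv b)).map C.sigmaW0

/-- `f_{ī′} = σ_{w_0} e_{\overline{n-i}} σ_{w_0}^{-1}`. -/
noncomputable def fBarPrime (C : Crystal n B) (i : ℕ) (b : B) : Option B :=
  (C.eBarIdx (n - i) (C.sigmaW0Inv b)).map C.sigmaW0

/-- `e_0^{[i]} = σ_{i-1} ⋯ σ_1 e_0 σ_1 ⋯ σ_{i-1}`. -/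
noncomputable def e0Idx (C : Crystal n B) (i : ℕ) (b : B) : Option B :=
  (C.e0 (C.sigmaUp (i - 1) b)).map (C.sigmaDown (i - 1))

/-- `f_0^{[i]} = σ_{i-1} ⋯ σ_1 f_0 σ_1 ⋯ σ_{i-1}`. -/
noncomputable def f0Idx (C : Crystal n B) (i : ℕ) (b : B) : Option B :=
  (C.f0 (C.sigmaUp (i - 1) b)).map (C.sigmaDown (i - 1))

def IsGLHighest (C : Crystal n B) (b : B) : Prop :=
  ∀ i, 1 ≤ i → i ≤ n - 1 → C.e i b = none

def IsGLLowest (C : Crystal n B) (b : B) : Prop :=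
  ∀ i, 1 ≤ i → i ≤ n - 1 → C.f i b = none

def IsQHighest (C : Crystal n B) (b : B) : Prop :=
  IsGLHighest C b ∧ ∀ i, 1 ≤ i → i ≤ n - 1 → C.eBarIdx i b = none

def IsQLowest (C : Crystal n B) (b : B) : Prop :=
  IsGLLowest C b ∧ ∀ i, 1 ≤ i → i ≤ n - 1 → C.fBarPrime i b = none

def IsQPlusHighest (C : Crystal n B) (b : B) : Prop :=
  IsQHighest C b ∧ ∀ i, 1 ≤ i → i ≤ n → C.e0Idx i b = none

def IsQPlusLowest (C : Crystal n B) (b : B) : Prop :=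
  IsQLowest C b ∧ ∀ i, 1 ≤ i → i ≤ n → C.f0Idx i b = none

/-! ### `gl_n`-specific notions (ignoring the barred and `0` operators) -/

def glStep (C : Crystal n B) (b c : B) : Prop := ∃ i, C.f i b = some c

def glJoined (C : Crystal n B) : B → B → Prop :=
  Relation.ReflTransGen (fun b c => glStep C b c ∨ glStep C c b)

def glComponent (C : Crystal n B) (b : B) : Set B := {c | glJoined C b c}

def glMapsAgree (C : Crystal n B) (D : Crystal n B') (φ : B → B') (x : B) : Prop :=
  (∀ j, D.wt (φ x) j = C.wt x j) ∧
  (∀ i, (C.e i x).map φ = D.e i (φ x)) ∧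
  (∀ i, (C.f i x).map φ = D.f i (φ x))

def IsGLIsoOn (C : Crystal n B) (D : Crystal n B') (S : Set B) (T : Set B') : Prop :=
  ∃ φ : B → B', Set.BijOn φ S T ∧ ∀ x ∈ S, glMapsAgree C D φ x

/-- The standard `gl_n`-crystal `𝔹_n` on the letters `1,…,n`. -/
def stdGLC (n : ℕ) : Crystal n ℕ where
  wt := fun l j => if j = l ∧ 1 ≤ l ∧ l ≤ n then 1 else 0
  e := fun i l => if 1 ≤ i ∧ i ≤ n - 1 ∧ l = i + 1 then some i else none
  f := fun i l => if 1 ≤ i ∧ i ≤ n - 1 ∧ l = i then some (i + 1) else none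
  ebar := fun _ => none
  fbar := fun _ => none
  e0 := fun _ => none
  f0 := fun _ => none

def GLPowT : ℕ → Type
  | 0 => PUnit
  | m + 1 => GLPowT m × ℕ

noncomputable def glPowC (n : ℕ) : (m : ℕ) → Crystal n (GLPowT m)
  | 0 => unitC n
  | m + 1 => tensor (glPowC n m) (stdGLC n)

/-- Normality for `gl_n`-crystals. -/
def IsGLNormal (C : Crystal n B) : Prop :=
  IsGL C ∧ ∀ b : B, ∃ (m : ℕ) (x : GLPowT m),
    IsGLIsoOn C (glPowC n m) (glComponent C b) (glComponent (glPowC n m) x)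

end Crystal

open Crystal

/-- Character of a finite crystal, as a polynomial in `x_1,…,x_n`. -/
noncomputable def char {n : ℕ} {B : Type} [Fintype B] (C : Crystal n B) :
    MvPolynomial (Fin n) ℤ :=
  ∑ b : B, ∏ i : Fin n, MvPolynomial.X i ^ (C.wt b ((i : ℕ) + 1)).toNat

-- Restriction of a partial operator to a subtype.
open Classical in
noncomputable def restrictP {α : Type} (P : α → Prop) (g : α → Option α) (x : Subtype P) :
    Option (Subtype P) :=
  (g x.1).bind (fun y => if h : P y then some ⟨y, h⟩ else none)

/-! ### The crystal of words `W⁺_n(m)` -/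

/-- `i`-unpaired indices (0-based) of a word, via the parenthesis matching where letters
with value `i` are `)` and letters with value `i+1` are `(`. -/
def wUnpaired (i : ℕ) (w : List (ℕ × Bool)) : List ℕ :=
  let r := ((List.range w.length).zip w).foldl (fun (st : List ℕ × List ℕ) p =>
    if p.2.1 = i + 1 then (p.1 :: st.1, st.2)
    else if p.2.1 = i then
      match st.1 with
      | _o :: os => (os, st.2)
      | [] => (st.1, p.1 :: st.2)
    else st) ([], [])
  r.2.reverse ++ r.1.reverse

def wordF (n i : ℕ) (w : List (ℕ × Bool)) : Option (List (ℕ × Bool)) :=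
  if 1 ≤ i ∧ i ≤ n - 1 then
    match ((wUnpaired i w).filter (fun j => (w.getD j default).1 == i)).getLast? with
    | none => none
    | some j => some (w.set j (i + 1, (w.getD j default).2))
  else none

def wordE (n i : ℕ) (w : List (ℕ × Bool)) : Option (List (ℕ × Bool)) :=
  if 1 ≤ i ∧ i ≤ n - 1 then
    match ((wUnpaired i w).filter (fun j => (w.getD j default).1 == i + 1)).head? with
    | none => none
    | some j => some (w.set j (i, (w.getD j default).2))
  else none

def wordFbar (n : ℕ) (w : List (ℕ × Bool)) : Option (List (ℕ × Bool)) :=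
  if 2 ≤ n then
    match w.findIdx? (fun l => l.1 == 1) with
    | none => none
    | some j =>
      if (w.take j).any (fun l => l.1 == 2) then none
      else
        match (w.drop (j + 1)).findIdx? (fun l => l.1 == 1) with
        | none => some (w.set j (2, (w.getD j default).2))
        | some k' =>
          let k := j + 1 + k'
          let a := w.getD j default
          let b := w.getD k default
          if a.2 = b.2 then some (w.set j (2, a.2))
          else if a.2 = false then some ((w.set j (2, true)).set k (1, false))
          else some ((w.set j (2, false)).set k (1, true))
  else none

def wordEbar (n : ℕ) (w : List (ℕ × Bool)) : Option (List (ℕ × Bool)) :=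
  if 2 ≤ n then
    match w.findIdx? (fun l => l.1 == 2) with
    | none => none
    | some j =>
      if (w.take j).any (fun l => l.1 == 1) then none
      else
        match (w.drop (j + 1)).findIdx? (fun l => l.1 == 1) with
        | none => some (w.set j (1, (w.getD j default).2))
        | some k' =>
          let k := j + 1 + k'
          let a := w.getD j default
          let b := w.getD k default
          if a.2 = b.2 then some (w.set j (1, a.2))
          else if a.2 = true then some ((w.set j (1, false)).set k (1, true))
          else some ((w.set j (1, true)).set k (1, false))
  else none

def wordF0 (w : List (ℕ × Bool)) : Option (List (ℕ × Bool)) :=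
  match w.findIdx? (fun l => l.1 == 1) with
  | some j => if (w.getD j default).2 = false then some (w.set j (1, true)) else none
  | none => none

def wordE0 (w : List (ℕ × Bool)) : Option (List (ℕ × Bool)) :=
  match w.findIdx? (fun l => l.1 == 1) with
  | some j => if (w.getD j default).2 = true then some (w.set j (1, false)) else none
  | none => none

/-- Membership in `W⁺_n(m)`. -/
def WordP (n m : ℕ) (w : List (ℕ × Bool)) : Prop :=
  w.length = m ∧ ∀ l ∈ w, 1 ≤ l.1 ∧ l.1 ≤ n

/-- The `q⁺_n`-crystal of words `W⁺_n(m)`. -/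
noncomputable def wordC (n m : ℕ) : Crystal n (Subtype (WordP n m)) where
  wt := fun w k =>
    if 1 ≤ k ∧ k ≤ n then ((w.1.filter (fun l => l.1 == k)).length : ℤ) else 0
  e := fun i => restrictP _ (wordE n i)
  f := fun i => restrictP _ (wordF n i)
  ebar := restrictP _ (wordEbar n)
  fbar := restrictP _ (wordFbar n)
  e0 := restrictP _ wordE0
  f0 := restrictP _ wordF0

/-- Interpret a word as an element of `(𝔹⁺_n)^{⊗m}`. -/
def toPow : (m : ℕ) → List (ℕ × Bool) → PowT m
  | 0, _ => PUnit.unit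
  | m + 1, w => (toPow m w.dropLast, w.getLast?.getD (0, false))


/-! ### Involution words and increasing factorizations -/

/-- One step of the Demazure product. -/
def demStep (π : Equiv.Perm ℤ) (i : ℤ) : Equiv.Perm ℤ :=
  if π (i + 1) < π i then π else π * Equiv.swap i (i + 1)

/-- Demazure product `1 ∘ s_{a_1} ∘ ⋯ ∘ s_{a_m}`. -/
def dem (w : List ℤ) : Equiv.Perm ℤ := w.foldl demStep 1

/-- `s_{a_m} ∘ ⋯ ∘ s_{a_1} ∘ 1 ∘ s_{a_1} ∘ ⋯ ∘ s_{a_m}`. -/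
def invEnd (w : List ℤ) : Equiv.Perm ℤ := dem (w.reverse ++ w)

/-- `w` is an involution word for `z`. -/
def IsInvWord (z : Equiv.Perm ℤ) (w : List ℤ) : Prop :=
  invEnd w = z ∧ ∀ v : List ℤ, invEnd v = z → w.length ≤ v.length

/-- The (0-based) index `j` is a commutation of the involution word `w`. -/
def IsCommutation (w : List ℤ) (j : ℕ) : Prop :=
  invEnd (w.take j) (w.getD j 0) = w.getD j 0 ∧
  invEnd (w.take j) (w.getD j 0 + 1) = w.getD j 0 + 1

/-- Remove primes from a primed word. -/
def unpr (w : List PLetter) : List ℤ := w.map Prod.fst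

/-- `w` is a primed involution word for `z`. -/
def IsPrimedInvWord (z : Equiv.Perm ℤ) (w : List PLetter) : Prop :=
  IsInvWord z (unpr w) ∧
  ∀ j, j < w.length → (w.getD j default).2 = true → IsCommutation (unpr w) j

/-- Value of a primed letter, doubled: `i ↦ 2i`, `i′ ↦ 2i - 1`. -/
def pvZ (l : PLetter) : ℤ := 2 * l.1 - (if l.2 then 1 else 0)

def StrictIncrW (w : List PLetter) : Prop := List.Chain' (· < ·) (w.map pvZ)

/-- Concatenation `a¹a²⋯aⁿ` of a tuple of primed words. -/
def concatT {n : ℕ} (a : Fin n → List PLetter) : List PLetter := (List.ofFn a).flatten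

/-- Membership in `Incr⁺_n(z)`. -/
def IncrP (n : ℕ) (z : Equiv.Perm ℤ) (a : Fin n → List PLetter) : Prop :=
  (∀ i, StrictIncrW (a i)) ∧ IsPrimedInvWord z (concatT a)

/-- Letters of `v` left unpaired by the pairing of Definition 5.5. -/
def pairAvail (v w : List PLetter) : List PLetter :=
  w.reverse.foldl (fun avail wj =>
    match avail.find? (fun x => decide (wj.1 < x.1)) with
    | some x => avail.erase x
    | none => avail) v

/-- Letters of `w` left unpaired by the pairing of Definition 5.5 (in increasing order). -/
def unpairedSnd (v w : List PLetter) : List PLetter :=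
  (w.reverse.foldl (fun (st : List PLetter × List PLetter) wj =>
    match st.1.find? (fun x => decide (wj.1 < x.1)) with
    | some x => (st.1.erase x, st.2)
    | none => (st.1, wj :: st.2)) (v, [])).2

def smallestAbsentAux : ℕ → ℤ → List ℤ → ℤ
  | 0, y, _ => y
  | fuel + 1, y, s => if y ∈ s then smallestAbsentAux fuel (y + 1) s else y

/-- The smallest integer `≥ y` not occurring in `s`. -/
def smallestAbsent (y : ℤ) (s : List ℤ) : ℤ := smallestAbsentAux (s.length + 1) y s

def largestAbsentAux : ℕ → ℤ → List ℤ → ℤ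
  | 0, y, _ => y
  | fuel + 1, y, s => if y ∈ s then largestAbsentAux fuel (y - 1) s else y

/-- The largest integer `≤ y` not occurring in `s`. -/
def largestAbsent (y : ℤ) (s : List ℤ) : ℤ := largestAbsentAux (s.length + 1) y s

/-- Ordered insertion of a primed letter into a strictly increasing primed word. -/
def insLetter : PLetter → List PLetter → List PLetter
  | l, [] => [l]
  | l, x :: xs => if pvZ l ≤ pvZ x then l :: x :: xs else x :: insLetter l xs

/-- Prime adjustment in case (L2) of Definition 5.6. -/
def adjustF (x y : ℤ) (p : List PLetter × List PLetter) : List PLetter × List PLetter :=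
  (List.range (y - x).toNat).foldl (fun q k =>
    let t : ℤ := x + k
    if ((t + 1, false) : PLetter) ∈ q.1 ∧ ((t, true) : PLetter) ∈ q.2 then
      (q.1.map (fun l => if l = ((t + 1, false) : PLetter) then (t + 1, true) else l),
       q.2.map (fun l => if l = ((t, true) : PLetter) then (t, false) else l))
    else q) p

/-- Prime adjustment in case (R2) of Definition 5.7. -/
def adjustE (x y : ℤ) (p : List PLetter × List PLetter) : List PLetter × List PLetter :=
  (List.range (y - x).toNat).foldl (fun q k =>
    let t : ℤ := x + k
    if ((t + 1, true) : PLetter) ∈ q.1 ∧ ((t, false) : PLetter) ∈ q.2 then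
      (q.1.map (fun l => if l = ((t + 1, true) : PLetter) then (t + 1, false) else l),
       q.2.map (fun l => if l = ((t, false) : PLetter) then (t, true) else l))
    else q) p

def upd2 {n : ℕ} (a : Fin n → List PLetter) (i : Fin n) (v : List PLetter)
    (j : Fin n) (w : List PLetter) : Fin n → List PLetter :=
  Function.update (Function.update a i v) j w

/-- The lowering operator `f_i` on increasing factorizations (Definition 5.6). -/
def rawIncrF (n i : ℕ) (a : Fin n → List PLetter) : Option (Fin n → List PLetter) :=
  if h : 1 ≤ i ∧ i ≤ n - 1 then
    let i1 : Fin n := ⟨i - 1, by omega⟩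
    let i2 : Fin n := ⟨i, by omega⟩
    let v := a i1
    let w := a i2
    match (pairAvail v w).getLast? with
    | none => none
    | some x =>
      let y := smallestAbsent x.1 (unpr w)
      if x.2 then
        some (upd2 a i1 (v.erase x) i2 (insLetter (y, true) w))
      else
        let p := adjustF x.1 y (v.erase x, insLetter (y, false) w)
        some (upd2 a i1 p.1 i2 p.2)
  else none

/-- The raising operator `e_i` on increasing factorizations (Definition 5.7). -/
def rawIncrE (n i : ℕ) (a : Fin n → List PLetter) : Option (Fin n → List PLetter) :=
  if h : 1 ≤ i ∧ i ≤ n - 1 then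
    let i1 : Fin n := ⟨i - 1, by omega⟩
    let i2 : Fin n := ⟨i, by omega⟩
    let v := a i1
    let w := a i2
    match (unpairedSnd v w).getLast? with
    | none => none
    | some y =>
      let x := largestAbsent y.1 (unpr v)
      if y.2 then
        some (upd2 a i1 (insLetter (x, true) v) i2 (w.erase y))
      else
        let p := adjustE x y.1 (insLetter (x, false) v, w.erase y)
        some (upd2 a i1 p.1 i2 p.2)
  else none

/-- The lowering operator `f_1̄` on increasing factorizations (Definition 5.8). -/
def rawIncrFbar (n : ℕ) (a : Fin n → List PLetter) : Option (Fin n → List PLetter) :=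
  if h : 2 ≤ n then
    let i1 : Fin n := ⟨0, by omega⟩
    let i2 : Fin n := ⟨1, by omega⟩
    match a i1 with
    | [] => none
    | l :: rest =>
      if (a i2).all (fun m => decide (pvZ l < pvZ m)) then
        match rest with
        | r :: rs =>
          if l.2 ≠ r.2 then
            some (upd2 a i1 ((r.1, !r.2) :: rs) i2 ((l.1, !l.2) :: a i2))
          else some (upd2 a i1 rest i2 (l :: a i2))
        | [] => some (upd2 a i1 [] i2 (l :: a i2))
      else none
  else none

/-- The raising operator `e_1̄` on increasing factorizations (Definition 5.9). -/
def rawIncrEbar (n : ℕ) (a : Fin n → List PLetter) : Option (Fin n → List PLetter) :=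
  if h : 2 ≤ n then
    let i1 : Fin n := ⟨0, by omega⟩
    let i2 : Fin n := ⟨1, by omega⟩
    match a i2 with
    | [] => none
    | l :: rest2 =>
      if (a i1).all (fun m => decide (pvZ l < pvZ m)) then
        match a i1 with
        | r :: rs =>
          if l.2 ≠ r.2 then
            some (upd2 a i1 ((l.1, !l.2) :: (r.1, !r.2) :: rs) i2 rest2)
          else some (upd2 a i1 (l :: a i1) i2 rest2)
        | [] => some (upd2 a i1 [l] i2 rest2)
      else none
  else none

/-- The operator `f_0` on increasing factorizations (Definition 5.10). -/
def rawIncrF0 (n : ℕ) (a : Fin n → List PLetter) : Option (Fin n → List PLetter) :=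
  if h : 1 ≤ n then
    let i1 : Fin n := ⟨0, by omega⟩
    match a i1 with
    | [] => none
    | l :: rest =>
      if l.2 = false then some (Function.update a i1 ((l.1, true) :: rest)) else none
  else none

/-- The operator `e_0` on increasing factorizations (Definition 5.10). -/
def rawIncrE0 (n : ℕ) (a : Fin n → List PLetter) : Option (Fin n → List PLetter) :=
  if h : 1 ≤ n then
    let i1 : Fin n := ⟨0, by omega⟩
    match a i1 with
    | [] => none
    | l :: rest =>
      if l.2 = true then some (Function.update a i1 ((l.1, false) :: rest)) else none
  else none

/-- The `q⁺_n`-crystal `Incr⁺_n(z)`. -/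
noncomputable def incrC (n : ℕ) (z : Equiv.Perm ℤ) : Crystal n (Subtype (IncrP n z)) where
  wt := fun a k => if h : 1 ≤ k ∧ k ≤ n then ((a.1 ⟨k - 1, by omega⟩).length : ℤ) else 0
  e := fun i => restrictP _ (rawIncrE n i)
  f := fun i => restrictP _ (rawIncrF n i)
  ebar := restrictP _ (rawIncrEbar n)
  fbar := restrictP _ (rawIncrFbar n)
  e0 := restrictP _ (rawIncrE0 n)
  f0 := restrictP _ (rawIncrF0 n)


/-! ### Coxeter-Knuth operators, marked cycles, descents -/

/-- The action of `ock` on a 3-letter window. -/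
def ockTriple (a b c : PLetter) : PLetter × PLetter × PLetter :=
  if a.1 = c.1 ∧ (b.1 = a.1 + 1 ∨ b.1 + 1 = a.1) ∧ b.2 = false ∧ ¬(a.2 = true ∧ c.2 = true) then
    ((b.1, c.2), (a.1, false), (b.1, a.2))
  else if (a.1 < c.1 ∧ c.1 < b.1) ∨ (b.1 < c.1 ∧ c.1 < a.1) then (b, a, c)
  else if (c.1 < a.1 ∧ a.1 < b.1) ∨ (b.1 < a.1 ∧ a.1 < c.1) then (a, c, b)
  else (a, b, c)

/-- The orthogonal Coxeter-Knuth operator `ock_i` (with 1-based window positions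
`i, i+1, i+2` for `i ≥ 1`, and the initial-2-letter rule for `i = 0`). -/
def ock (i : ℕ) (w : List PLetter) : List PLetter :=
  if i = 0 then
    match w with
    | x :: y :: rest => (y.1, x.2) :: (x.1, y.2) :: rest
    | _ => w
  else if i + 2 ≤ w.length then
    let a := w.getD (i - 1) default
    let b := w.getD i default
    let c := w.getD (i + 1) default
    let t := ockTriple a b c
    w.take (i - 1) ++ [t.1, t.2.1, t.2.2] ++ w.drop (i + 2)
  else w

/-- The cycle `γ_j(w) = s_{w_m} ⋯ s_{w_{j+2}} s_{w_{j+1}} ({w_j, w_j + 1})` (0-based `j`). -/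
def gammaCyc (w : List ℤ) (j : ℕ) : Set ℤ :=
  let P : Equiv.Perm ℤ := (((w.drop (j + 1)).reverse).map (fun t => Equiv.swap t (t + 1))).prod
  {P (w.getD j 0), P (w.getD j 0 + 1)}

/-- The set of marked cycles of a primed involution word. -/
def markedOf (w : List PLetter) : Set (Set ℤ) :=
  {S | ∃ j, j < w.length ∧ (w.getD j default).2 = true ∧ S = gammaCyc (unpr w) j}

/-- Descent set of a primed word (1-based positions). -/
def DesSet (w : List PLetter) : Set ℕ :=
  {i | 1 ≤ i ∧ i + 1 ≤ w.length ∧ pvZ (w.getD i default) < pvZ (w.getD (i - 1) default)}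

/-! ### Unprimed pairing and reduced words (Lemmas 5.3 and 5.6) -/

/-- Letters of `v` left unpaired by the pairing of Definition 5.5, unprimed version. -/
def pairAvailZ (v w : List ℤ) : List ℤ :=
  w.reverse.foldl (fun avail wj =>
    match avail.find? (fun x => decide (wj < x)) with
    | some x => avail.erase x
    | none => avail) v

/-- The permutation `s_{a_1} s_{a_2} ⋯ s_{a_m}`. -/
def permOf (w : List ℤ) : Equiv.Perm ℤ := (w.map (fun i => Equiv.swap i (i + 1))).prod

/-- `w` is a reduced word (for some element of `S_ℤ`). -/
def IsReducedWord (w : List ℤ) : Prop :=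
  ∀ v : List ℤ, permOf v = permOf w → w.length ≤ v.length

/-- Ordered insertion of an integer into a strictly increasing integer word. -/
def insLetterZ : ℤ → List ℤ → List ℤ
  | x, [] => [x]
  | x, y :: ys => if x ≤ y then x :: y :: ys else y :: insLetterZ x ys


/-! ### Semistandard shifted tableaux and their crystal operators -/

/-- Doubled value of a tableau letter: `k ↦ 2k`, `k′ ↦ 2k - 1`. -/
def pvN (l : NLet) : ℤ := 2 * (l.1 : ℤ) - (if l.2 then 1 else 0)

/-- `lam` is a strict partition with at most `n` parts (coordinates `1,…,n`). -/
def IsStrictPart (n : ℕ) (lam : ℕ → ℕ) : Prop :=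
  (∀ i, i = 0 ∨ n < i → lam i = 0) ∧
  (∀ i, 1 ≤ i → (lam (i + 1) < lam i ∨ (lam i = 0 ∧ lam (i + 1) = 0)))

/-- Membership of a (1-based) box in the shifted diagram of `lam`. -/
abbrev InSD (lam : ℕ → ℕ) (p : ℕ × ℕ) : Prop :=
  1 ≤ p.1 ∧ p.1 ≤ p.2 ∧ p.2 < p.1 + lam p.1

/-- `T` is a semistandard shifted tableau of shape `lam` with entries at most `n`. -/
def IsShTab (n : ℕ) (lam : ℕ → ℕ) (T : Tab) : Prop :=
  (∀ p : ℕ × ℕ, (T p).isSome ↔ InSD lam p) ∧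
  (∀ p v, T p = some v → 1 ≤ v.1 ∧ v.1 ≤ n) ∧
  (∀ i j v w, T (i, j) = some v → T (i, j + 1) = some w →
    pvN v ≤ pvN w ∧ (pvN v = pvN w → v.2 = false)) ∧
  (∀ i j v w, T (i, j) = some v → T (i + 1, j) = some w →
    pvN v ≤ pvN w ∧ (pvN v = pvN w → v.2 = true))

def setE (T : Tab) (q : ℕ × ℕ) (l : NLet) : Tab := fun p => if p = q then some l else T p

def ceilIs (T : Tab) (q : ℕ × ℕ) (v : ℕ) : Bool :=
  match T q with
  | some l => l.1 == v
  | none => false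

/-- Boxes of `T` with entries in `{i′, i, (i+1)′, i+1}`, in shifted reading order. -/
def readBoxes (T : Tab) (i bnd : ℕ) : List (ℕ × ℕ) :=
  ((List.range bnd).reverse.map (fun k0 =>
    let k := k0 + 1
    ((List.range bnd).filterMap (fun r0 =>
      let r := r0 + 1
      match T (r, k) with
      | some (v, true) => if v = i ∨ v = i + 1 then some ((r, k) : ℕ × ℕ) else none
      | _ => none)) ++
    ((List.range bnd).filterMap (fun c0 =>
      let c := c0 + 1
      match T (k, c) with
      | some (v, false) => if v = i ∨ v = i + 1 then some ((k, c) : ℕ × ℕ) else none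
      | _ => none)))).flatten

/-- Unpaired boxes after the parenthesis matching (entries `i` are `)`, `i+1` are `(`). -/
def bracketBoxes (T : Tab) (i : ℕ) (l : List (ℕ × ℕ)) : List (ℕ × ℕ) :=
  let r := l.foldl (fun (st : List (ℕ × ℕ) × List (ℕ × ℕ)) q =>
    if ceilIs T q (i + 1) then (q :: st.1, st.2)
    else
      match st.1 with
      | _o :: os => (os, st.2)
      | [] => (st.1, q :: st.2)) ([], [])
  r.2.reverse ++ r.1.reverse

/-- Most-northwest box of the ribbon (within `inSet`) containing the given box. -/
def nwEnd (inSet : ℕ × ℕ → Bool) : ℕ → ℕ × ℕ → ℕ × ℕ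
  | 0, p => p
  | fuel + 1, p =>
    if inSet (p.1 + 1, p.2) = true then nwEnd inSet fuel (p.1 + 1, p.2)
    else if 1 ≤ p.2 ∧ inSet (p.1, p.2 - 1) = true then nwEnd inSet fuel (p.1, p.2 - 1)
    else p

/-- Walk southeast through a ribbon looking for the first box satisfying `pred`. -/
def seFind (inSet pred : ℕ × ℕ → Bool) : ℕ → ℕ × ℕ → Option (ℕ × ℕ)
  | 0, _ => none
  | fuel + 1, p =>
    if pred p = true then some p
    else if 2 ≤ p.1 ∧ inSet (p.1 - 1, p.2) = true then seFind inSet pred fuel (p.1 - 1, p.2)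
    else if inSet (p.1, p.2 + 1) = true then seFind inSet pred fuel (p.1, p.2 + 1)
    else none

/-- Interchange the primes on the entries in boxes `p` and `q`. -/
def swapPr (T : Tab) (p q : ℕ × ℕ) : Tab :=
  match T p, T q with
  | some a, some b => if a.2 ≠ b.2 then setE (setE T p (a.1, b.2)) q (b.1, a.2) else T
  | _, _ => T

/-- The lowering operator `f_i` on shifted tableaux (Definition 6.4). -/
def tabF (n bnd i : ℕ) (T : Tab) : Option Tab :=
  if 1 ≤ i ∧ i ≤ n - 1 then
    match ((bracketBoxes T i (readBoxes T i bnd)).filter (fun q => ceilIs T q i)).getLast? with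
    | none => none
    | some q =>
      let x := q.1
      let y := q.2
      match T q with
      | some (_, false) =>
        if T (x, y + 1) = some (i + 1, true) then
          some (setE (setE T q (i + 1, true)) (x, y + 1) (i + 1, false))
        else if ¬(ceilIs T (x + 1, y) (i + 1) = true) then
          some (setE T q (i + 1, false))
        else
          let nw := nwEnd (fun r => ceilIs T r (i + 1)) (2 * bnd + 2) (x + 1, y)
          if nw.1 ≠ nw.2 then
            some (setE (setE T q (i + 1, true)) nw (i + 1, false))
          else
            some (swapPr (setE T q (i + 1, true)) (nw.1, nw.1) (nw.1 - 1, nw.1 - 1))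
      | some (_, true) =>
        if T (x + 1, y) = some (i, false) then
          some (setE (setE T q (i, false)) (x + 1, y) (i + 1, true))
        else if ¬(T (x, y + 1) = some (i, false) ∨ T (x, y + 1) = some (i + 1, true)) then
          some (setE T q (i + 1, true))
        else
          match seFind (fun r => ceilIs T r i)
              (fun r => decide (T r = some (i, false) ∧
                ¬(T (r.1, r.2 + 1) = some (i, false) ∨ T (r.1, r.2 + 1) = some (i + 1, true))))
              (2 * bnd + 2) q with
          | some r => some (setE (setE T q (i, false)) r (i + 1, true))
          | none => none
      | none => none
  else none

/-- The lowering operator `f_1̄` on shifted tableaux (Definition 6.7). -/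
def tabFbar (n bnd : ℕ) (T : Tab) : Option Tab :=
  if 2 ≤ n then
    let row1 : List (ℕ × ℕ) := (List.range bnd).map (fun c => (1, c + 1))
    if row1.any (fun q => decide (T q = some (2, true))) then none
    else
      match (row1.filter (fun q => ceilIs T q 1)).getLast? with
      | none => none
      | some q =>
        if q.1 = q.2 ∧ T q = some (1, false) then some (setE T q (2, false))
        else some (setE T q (2, true))
  else none

/-- The operator `f_0` on shifted tableaux. -/
def tabF0 (T : Tab) : Option Tab :=
  if T (1, 1) = some (1, false) then some (setE T (1, 1) (1, true))
  else none

/-- The operator `e_0` on shifted tableaux. -/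
def tabE0 (T : Tab) : Option Tab :=
  if T (1, 1) = some (1, true) then some (setE T (1, 1) (1, false))
  else none

-- Partial inverse of a partial operator, via choice.
open Classical in
noncomputable def pInv {α : Type} (g : α → Option α) (y : α) : Option α :=
  if h : ∃ x, g x = some y then some h.choose else none

/-- The underlying type of `ShTab⁺_n(lam)`. -/
def ShTy (n : ℕ) (lam : ℕ → ℕ) : Type := Subtype (IsShTab n lam)

/-- The `q⁺_n`-crystal `ShTab⁺_n(lam)`. -/
noncomputable def shtabC (n : ℕ) (lam : ℕ → ℕ) : Crystal n (ShTy n lam) :=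
  let bnd := n + lam 1 + 2
  let fop : ℕ → ShTy n lam → Option (ShTy n lam) := fun i => restrictP _ (tabF n bnd i)
  let fbarop : ShTy n lam → Option (ShTy n lam) := restrictP _ (tabFbar n bnd)
  { wt := fun T k =>
      if 1 ≤ k ∧ k ≤ n then
        (((List.range bnd).map (fun r =>
          ((List.range bnd).filter (fun c => ceilIs T.1 (r + 1, c + 1) k)).length)).sum : ℤ)
      else 0
    f := fop
    e := fun i => pInv (fop i)
    fbar := fbarop
    ebar := pInv fbarop
    f0 := restrictP _ tabF0
    e0 := restrictP _ tabE0 }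

/-- The tableau `T^highest_lam`, with every entry in row `i` equal to `i`. -/
def highestTab (lam : ℕ → ℕ) : Tab := fun p => if InSD lam p then some (p.1, false) else none

def shiftLam (lam : ℕ → ℕ) (k : ℕ) : ℕ → ℕ := fun i => lam (i + k)

/-- The defining property of `T^lowest_lam`: a semistandard shifted tableau of shape `lam`
with no primed diagonal entries, whose entries on the `k`-th ribbon all equal
`(n-k)′` or `n-k`. -/
def IsLowestSpec (n : ℕ) (lam : ℕ → ℕ) (T : Tab) : Prop :=
  IsShTab n lam T ∧
  (∀ i v, T (i, i) = some v → v.2 = false) ∧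
  (∀ k, k < n → ∀ p : ℕ × ℕ, InSD (shiftLam lam k) p → ¬InSD (shiftLam lam (k + 1)) p →
    ∀ v, T p = some v → v.1 = n - k)

/-- Add a prime to every diagonal entry. -/
def primeDiag (T : Tab) : Tab := fun p =>
  if p.1 = p.2 then (T p).map (fun l => (l.1, true)) else T p


/-! ### Orthogonal Edelman-Greene insertion -/

def setZ (T : ZTab) (q : ℕ × ℕ) (l : PLetter) : ZTab := fun p => if p = q then some l else T p

def swapPrZ (T : ZTab) (p q : ℕ × ℕ) : ZTab :=
  match T p, T q with
  | some a, some b => if a.2 ≠ b.2 then setZ (setZ T p (a.1, b.2)) q (b.1, a.2) else T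
  | _, _ => T

/-- One insertion of a letter into a shifted tableau, per Definition 7.1; returns the
resulting tableau, the box added, and whether the process ended in column insertion. -/
def oegIns (bnd : ℕ) : ℕ → ZTab → Bool → ℕ → PLetter → ZTab × ((ℕ × ℕ) × Bool)
  | 0, T, isCol, _, _ => (T, ((0, 0), isCol))
  | fuel + 1, T, isCol, k, x =>
    let cells : List (ℕ × ℕ) :=
      if isCol then (List.range bnd).map (fun r => (r + 1, k))
      else (List.range bnd).map (fun c => (k, k + c))
    let filled := cells.filter (fun q => (T q).isSome)
    match filled.find? (fun q => decide (x.1 ≤ ((T q).getD default).1)) with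
    | none =>
      match cells.find? (fun q => (T q).isNone) with
      | none => (T, ((0, 0), isCol))
      | some q =>
        if q.1 = q.2 then (setZ T q (x.1, false), (q, isCol || x.2))
        else (setZ T q x, (q, isCol))
    | some qy =>
      let y := (T qy).getD default
      if y.1 = x.1 then
        let T' := match filled.find? (fun q => decide (x.1 < ((T q).getD default).1)) with
          | some qt => swapPrZ T qy qt
          | none => T
        oegIns bnd fuel T' (decide (qy.1 = qy.2)) (k + 1) (x.1 + 1, x.2)
      else
        if qy.1 = qy.2 then
          oegIns bnd fuel (setZ T qy (x.1, false)) true (k + 1) (y.1, y.2 || x.2)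
        else
          oegIns bnd fuel (setZ T qy x) false (k + 1) y

def emptyZTab : ZTab := fun _ => none
def emptyTab : Tab := fun _ => none

/-- The orthogonal Edelman-Greene insertion and recording tableaux `(P^O_EG(a), Q^O_EG(a))`. -/
def oegPQ (n : ℕ) (a : Fin n → List PLetter) : ZTab × Tab :=
  let letters : List (PLetter × ℕ) :=
    (List.ofFn (fun i : Fin n => (a i).map (fun l => (l, (i : ℕ) + 1)))).flatten
  let bnd := letters.length + 2
  letters.foldl (fun (PQ : ZTab × Tab) xl =>
    let r := oegIns bnd bnd PQ.1 false 1 xl.1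
    (r.1, setE PQ.2 r.2.1 (xl.2, r.2.2))) (emptyZTab, emptyTab)

def oegP (n : ℕ) (a : Fin n → List PLetter) : ZTab := (oegPQ n a).1
def oegQ (n : ℕ) (a : Fin n → List PLetter) : Tab := (oegPQ n a).2

/-! ### Disjoint unions of crystals -/

def sigmaC {n : ℕ} {ι : Type} {β : ι → Type} (Cf : ∀ i, Crystal n (β i)) :
    Crystal n (Σ i, β i) where
  wt := fun x => (Cf x.1).wt x.2
  e := fun k x => ((Cf x.1).e k x.2).map (fun b => ⟨x.1, b⟩)
  f := fun k x => ((Cf x.1).f k x.2).map (fun b => ⟨x.1, b⟩)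
  ebar := fun x => ((Cf x.1).ebar x.2).map (fun b => ⟨x.1, b⟩)
  fbar := fun x => ((Cf x.1).fbar x.2).map (fun b => ⟨x.1, b⟩)
  e0 := fun x => ((Cf x.1).e0 x.2).map (fun b => ⟨x.1, b⟩)
  f0 := fun x => ((Cf x.1).f0 x.2).map (fun b => ⟨x.1, b⟩)

/-- Involutions in `S_ℤ` (finitely supported permutations of `ℤ`). -/
def IZ : Type := {z : Equiv.Perm ℤ // z * z = 1 ∧ {i : ℤ | z i ≠ i}.Finite}

/-- The disjoint union `⊔_z Incr⁺_n(z)` over all involutions `z ∈ S_ℤ`. -/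
def DomT (n : ℕ) : Type := Σ z : IZ, Subtype (IncrP n z.1)

noncomputable def domC (n : ℕ) : Crystal n (DomT n) := sigmaC (fun z : IZ => incrC n z.1)

/-- Strict partitions in `ℕ^n`. -/
def SPart (n : ℕ) : Type := {lam : ℕ → ℕ // IsStrictPart n lam}

/-- The disjoint union `⊔_lam ShTab⁺_n(lam)` over all strict partitions `lam ∈ ℕ^n`. -/
def CodT (n : ℕ) : Type := Σ lam : SPart n, ShTy n lam.1

noncomputable def codC (n : ℕ) : Crystal n (CodT n) := sigmaC (fun lam : SPart n => shtabC n lam.1)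




lemma iterO_succ' (g : B → Option B) (k : ℕ) (b : B) :
    iterO g (k+1) b = (g b).bind (iterO g k) := by
  induction k generalizing b with
  | zero => cases h : g b <;> simp [iterO, h]
  | succ k ih =>
    show (iterO g (k+1) b).bind g = _
    rw [ih]
    cases h : g b with
    | none => simp
    | some c => simp [iterO]

lemma iterO_none_mono (g : B → Option B) {b : B} {k m : ℕ} (h : iterO g k b = none)
    (hkm : k ≤ m) : iterO g m b = none := by
  obtain ⟨j, rfl⟩ := Nat.exists_eq_add_of_le hkm
  induction j with
  | zero => simpa using h
  | succ j ih =>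
    show (iterO g (k+j) b).bind g = none
    rw [ih (by omega)]; rfl

noncomputable def clen (g : B → Option B) (b : B) : ℕ := sSup {k | iterO g k b ≠ none}

lemma clen_spec (g : B → Option B) (b : B) (hb : ∃ N, iterO g N b = none) :
    iterO g (clen g b) b ≠ none ∧ ∀ k, iterO g k b ≠ none → k ≤ clen g b := by
  obtain ⟨N, hN⟩ := hb
  have hbdd : ∀ k ∈ {k | iterO g k b ≠ none}, k ≤ N := by
    intro k hk; by_contra h; exact hk (iterO_none_mono g hN (by omega))
  have hne : (0:ℕ) ∈ {k | iterO g k b ≠ none} := by simp [iterO]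
  have hmem := Nat.sSup_mem ⟨0, hne⟩ ⟨N, hbdd⟩
  exact ⟨hmem, fun k hk => le_csSup ⟨N, hbdd⟩ hk⟩

lemma clen_eq_zero (g : B → Option B) (b : B) (hb : ∃ N, iterO g N b = none) :
    clen g b = 0 ↔ g b = none := by
  have hs := clen_spec g b hb
  constructor
  · intro h0
    by_contra hg
    have h1 : iterO g 1 b ≠ none := by simp [iterO, Option.bind]; exact fun h => hg h
    have := hs.2 1 h1
    omega
  · intro hg
    by_contra h
    have h1 : iterO g 1 b = none := by simp [iterO, hg]
    exact hs.1 (iterO_none_mono g h1 (by omega))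

lemma clen_succ (g : B → Option B) {b c : B} (hg : g b = some c) (hb : ∃ N, iterO g N b = none) :
    clen g b = clen g c + 1 := by
  have hshift : ∀ k, iterO g (k+1) b = iterO g k c := by
    intro k; rw [iterO_succ', hg]; rfl
  have hc : ∃ N, iterO g N c = none := by
    obtain ⟨N, hN⟩ := hb
    refine ⟨N, ?_⟩
    rw [← hshift N]
    exact iterO_none_mono g hN (by omega)
  have sb := clen_spec g b hb
  have sc := clen_spec g c hc
  have h1 : clen g c + 1 ≤ clen g b := sb.2 _ (by rw [hshift]; exact sc.1)
  have h2 : clen g b ≤ clen g c + 1 := by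
    rcases hk : clen g b with _ | k
    · omega
    · have hne : iterO g (k+1) b ≠ none := by rw [← hk]; exact sb.1
      rw [hshift] at hne
      have := sc.2 _ hne
      omega
  omega

section SymQAux
open Crystal
variable {n : ℕ} {B : Type} {C : Crystal n B}

lemma f_some_wt (hC : IsGL C) {i : ℕ} (hi1 : 1 ≤ i) (hi2 : i ≤ n-1) {b c : B}
    (h : C.f i b = some c) (j : ℕ) :
    C.wt c j = C.wt b j - (if j = i then 1 else 0) + (if j = i+1 then 1 else 0) := by
  have he : C.e i c = some b := (hC.ef_iff i hi1 hi2 c b).mpr h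
  have h2 := hC.e_wt i hi1 hi2 c b he j
  split_ifs at h2 ⊢ <;> omega

lemma phi_f_step (hC : IsGL C) {i : ℕ} {b c : B} (h : C.f i b = some c) :
    C.phi i b = C.phi i c + 1 := clen_succ _ h (hC.f_bdd i b)

lemma eps_f_step (hC : IsGL C) {i : ℕ} (hi1 : 1 ≤ i) (hi2 : i ≤ n-1) {b c : B}
    (h : C.f i b = some c) : C.eps i c = C.eps i b + 1 :=
  clen_succ _ ((hC.ef_iff i hi1 hi2 c b).mpr h) (hC.e_bdd i c)

lemma eps_e_step (hC : IsGL C) {i : ℕ} {b c : B} (h : C.e i b = some c) :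
    C.eps i b = C.eps i c + 1 := clen_succ _ h (hC.e_bdd i b)

lemma phi_e_step (hC : IsGL C) {i : ℕ} (hi1 : 1 ≤ i) (hi2 : i ≤ n-1) {b c : B}
    (h : C.e i b = some c) : C.phi i c = C.phi i b + 1 :=
  clen_succ _ ((hC.ef_iff i hi1 hi2 b c).mp h) (hC.f_bdd i c)

lemma iter_f_props (hC : IsGL C) {i : ℕ} (hi1 : 1 ≤ i) (hi2 : i ≤ n-1) :
    ∀ k (b c : B), iterO (C.f i) k b = some c →
    (∀ j, C.wt c j = C.wt b j - (k:ℤ) * (if j = i then 1 else 0)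
        + (k:ℤ) * (if j = i+1 then 1 else 0)) ∧
    C.eps i c = C.eps i b + k ∧ C.phi i b = C.phi i c + k := by
  intro k
  induction k with
  | zero =>
    intro b c h
    simp only [iterO, Option.some.injEq] at h
    subst h
    simp
  | succ k ih =>
    intro b c h
    rw [iterO_succ'] at h
    cases hfb : C.f i b with
    | none => rw [hfb] at h; simp at h
    | some d =>
      rw [hfb] at h
      simp only [Option.bind_some] at h
      obtain ⟨hw, he, hp⟩ := ih d c h
      have he1 := eps_f_step hC hi1 hi2 hfb
      have hp1 := phi_f_step hC hfb
      refine ⟨fun j => ?_, by omega, by omega⟩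
      have h2 := hw j
      have h3 := f_some_wt hC hi1 hi2 hfb j
      push_cast at h2 h3 ⊢
      split_ifs at h2 h3 ⊢ <;> omega

lemma iter_e_props (hC : IsGL C) {i : ℕ} (hi1 : 1 ≤ i) (hi2 : i ≤ n-1) :
    ∀ k (b c : B), iterO (C.e i) k b = some c →
    (∀ j, C.wt c j = C.wt b j + (k:ℤ) * (if j = i then 1 else 0)
        - (k:ℤ) * (if j = i+1 then 1 else 0)) ∧
    C.eps i b = C.eps i c + k ∧ C.phi i c = C.phi i b + k := by
  intro k
  induction k with
  | zero =>
    intro b c h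
    simp only [iterO, Option.some.injEq] at h
    subst h
    simp
  | succ k ih =>
    intro b c h
    rw [iterO_succ'] at h
    cases hfb : C.e i b with
    | none => rw [hfb] at h; simp at h
    | some d =>
      rw [hfb] at h
      simp only [Option.bind_some] at h
      obtain ⟨hw, he, hp⟩ := ih d c h
      have he1 := eps_e_step hC hfb
      have hp1 := phi_e_step hC hi1 hi2 hfb
      refine ⟨fun j => ?_, by omega, by omega⟩
      have h2 := hw j
      have h3 := hC.e_wt i hi1 hi2 b d hfb j
      push_cast at h2 h3 ⊢
      split_ifs at h2 h3 ⊢ <;> omega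

lemma iter_f_defined (hC : IsGL C) {i : ℕ} (b : B) {k : ℕ} (hk : k ≤ C.phi i b) :
    ∃ c, iterO (C.f i) k b = some c := by
  have hs := clen_spec (C.f i) b (hC.f_bdd i b)
  have hne : iterO (C.f i) k b ≠ none := fun h => hs.1 (iterO_none_mono _ h hk)
  cases hcc : iterO (C.f i) k b with
  | none => exact absurd hcc hne
  | some c => exact ⟨c, rfl⟩

lemma iter_e_defined (hC : IsGL C) {i : ℕ} (b : B) {k : ℕ} (hk : k ≤ C.eps i b) :
    ∃ c, iterO (C.e i) k b = some c := by
  have hs := clen_spec (C.e i) b (hC.e_bdd i b)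
  have hne : iterO (C.e i) k b ≠ none := fun h => hs.1 (iterO_none_mono _ h hk)
  cases hcc : iterO (C.e i) k b with
  | none => exact absurd hcc hne
  | some c => exact ⟨c, rfl⟩

lemma iter_ef_cancel (hC : IsGL C) {i : ℕ} (hi1 : 1 ≤ i) (hi2 : i ≤ n-1) :
    ∀ k (b c : B), iterO (C.f i) k b = some c → iterO (C.e i) k c = some b := by
  intro k
  induction k with
  | zero =>
    intro b c h
    simp only [iterO, Option.some.injEq] at h ⊢
    rw [h]
  | succ k ih =>
    intro b c h
    have hstep : ∃ d, iterO (C.f i) k b = some d ∧ C.f i d = some c := by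
      cases hd : iterO (C.f i) k b with
      | none =>
        exfalso
        have : iterO (C.f i) (k+1) b = none := by
          show (iterO (C.f i) k b).bind (C.f i) = none
          rw [hd]; rfl
        rw [h] at this; exact nomatch this
      | some d =>
        refine ⟨d, rfl, ?_⟩
        have : iterO (C.f i) (k+1) b = (iterO (C.f i) k b).bind (C.f i) := rfl
        rw [this, hd] at h
        simpa using h
    obtain ⟨d, hd, hdc⟩ := hstep
    have hih := ih b d hd
    have he : C.e i c = some d := (hC.ef_iff i hi1 hi2 c d).mpr hdc
    rw [iterO_succ', he]
    simpa using hih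

lemma iter_fe_cancel (hC : IsGL C) {i : ℕ} (hi1 : 1 ≤ i) (hi2 : i ≤ n-1) :
    ∀ k (b c : B), iterO (C.e i) k b = some c → iterO (C.f i) k c = some b := by
  intro k
  induction k with
  | zero =>
    intro b c h
    simp only [iterO, Option.some.injEq] at h ⊢
    rw [h]
  | succ k ih =>
    intro b c h
    have hstep : ∃ d, iterO (C.e i) k b = some d ∧ C.e i d = some c := by
      cases hd : iterO (C.e i) k b with
      | none =>
        exfalso
        have : iterO (C.e i) (k+1) b = none := by
          show (iterO (C.e i) k b).bind (C.e i) = none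
          rw [hd]; rfl
        rw [h] at this; exact nomatch this
      | some d =>
        refine ⟨d, rfl, ?_⟩
        have : iterO (C.e i) (k+1) b = (iterO (C.e i) k b).bind (C.e i) := rfl
        rw [this, hd] at h
        simpa using h
    obtain ⟨d, hd, hdc⟩ := hstep
    have hih := ih b d hd
    have hf : C.f i c = some d := (hC.ef_iff i hi1 hi2 d c).mp hdc
    rw [iterO_succ', hf]
    simpa using hih

end SymQAux

section SymQAux2
open Crystal
variable {n : ℕ} {B : Type} {C : Crystal n B}

lemma sigma_main (hC : IsGL C) {i : ℕ} (hi1 : 1 ≤ i) (hi2 : i ≤ n-1) (b : B) :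
    (∀ j, C.wt (C.sigma i b) j =
       if j = i then C.wt b (i+1) else if j = i+1 then C.wt b i else C.wt b j) ∧
    C.sigma i (C.sigma i b) = b := by
  have hstr := hC.string_eq i hi1 hi2 b
  by_cases hle : C.eps i b ≤ C.phi i b
  · obtain ⟨c, hc⟩ := iter_f_defined hC b (show C.phi i b - C.eps i b ≤ C.phi i b by omega)
    have hsb : C.sigma i b = c := by
      simp only [Crystal.sigma, if_pos hle, hc, Option.getD_some]
    obtain ⟨hw, he, hp⟩ := iter_f_props hC hi1 hi2 _ b c hc
    have hstrc := hC.string_eq i hi1 hi2 c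
    constructor
    · intro j
      rw [hsb]
      rcases eq_or_ne j i with rfl | h1
      · have hj := hw j
        simp only [if_pos rfl, if_neg (show ¬ j = j + 1 by omega), mul_one, mul_zero, eq_self_iff_true, if_true, ite_true] at hj ⊢
        omega
      · rcases eq_or_ne j (i+1) with rfl | h2
        · have hj := hw (i+1)
          simp only [if_neg (show ¬ i+1 = i by omega), if_pos rfl, mul_one, mul_zero, eq_self_iff_true, if_true, ite_true] at hj ⊢
          omega
        · have hj := hw j
          simp only [if_neg h1, if_neg h2, mul_one, mul_zero, eq_self_iff_true, if_true, ite_true] at hj ⊢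
          omega
    · rw [hsb]
      simp only [Crystal.sigma]
      by_cases h0 : C.eps i c ≤ C.phi i c
      · rw [if_pos h0]
        have hk0 : C.phi i b - C.eps i b = 0 := by omega
        have hk0' : C.phi i c - C.eps i c = 0 := by omega
        rw [hk0']
        have hcb : c = b := by
          rw [hk0] at hc
          simpa [iterO] using hc.symm
        simp [iterO, hcb]
      · rw [if_neg h0]
        have hkk : C.eps i c - C.phi i c = C.phi i b - C.eps i b := by omega
        rw [hkk, iter_ef_cancel hC hi1 hi2 _ b c hc]
        rfl
  · obtain ⟨c, hc⟩ := iter_e_defined hC b (show C.eps i b - C.phi i b ≤ C.eps i b by omega)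
    have hsb : C.sigma i b = c := by
      simp only [Crystal.sigma, if_neg hle, hc, Option.getD_some]
    obtain ⟨hw, he, hp⟩ := iter_e_props hC hi1 hi2 _ b c hc
    constructor
    · intro j
      rw [hsb]
      rcases eq_or_ne j i with rfl | h1
      · have hj := hw j
        simp only [if_pos rfl, if_neg (show ¬ j = j + 1 by omega), mul_one, mul_zero, eq_self_iff_true, if_true, ite_true] at hj ⊢
        omega
      · rcases eq_or_ne j (i+1) with rfl | h2
        · have hj := hw (i+1)
          simp only [if_neg (show ¬ i+1 = i by omega), if_pos rfl, mul_one, mul_zero, eq_self_iff_true, if_true, ite_true] at hj ⊢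
          omega
        · have hj := hw j
          simp only [if_neg h1, if_neg h2, mul_one, mul_zero, eq_self_iff_true, if_true, ite_true] at hj ⊢
          omega
    · rw [hsb]
      simp only [Crystal.sigma]
      have h0 : C.eps i c ≤ C.phi i c := by omega
      rw [if_pos h0]
      have hkk : C.phi i c - C.eps i c = C.eps i b - C.phi i b := by omega
      rw [hkk, iter_fe_cancel hC hi1 hi2 _ b c hc]
      rfl

end SymQAux2

section SymPart
open Crystal MvPolynomial
variable {n : ℕ} {B : Type} [Fintype B] {C : Crystal n B}

noncomputable def cmon (C : Crystal n B) (b : B) : MvPolynomial (Fin n) ℤ :=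
  ∏ j : Fin n, X j ^ (C.wt b ((j : ℕ) + 1)).toNat

lemma char_eq (C : Crystal n B) : char C = ∑ b : B, cmon C b := rfl

lemma rename_adj (hC : IsGL C) (a : Fin n) (ha : (a:ℕ) + 2 ≤ n) :
    rename (Equiv.swap a ⟨(a:ℕ)+1, by omega⟩) (char C) = char C := by
  set a' : Fin n := ⟨(a:ℕ)+1, by omega⟩ with ha'
  set i : ℕ := (a:ℕ) + 1 with hi
  have hi1 : 1 ≤ i := by omega
  have hi2 : i ≤ n - 1 := by omega
  set σ := Equiv.swap a a' with hσ
  set τ := fun b => C.sigma i b with hτdef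
  have hτ : Function.Involutive τ := fun b => (sigma_main hC hi1 hi2 b).2
  rw [char_eq, map_sum]
  have key : ∀ b : B, rename σ (cmon C b) = cmon C (τ b) := by
    intro b
    rw [cmon, map_prod]
    simp only [map_pow, rename_X]
    rw [show cmon C (τ b) = ∏ j : Fin n, X j ^ (C.wt (τ b) ((j : ℕ) + 1)).toNat from rfl]
    rw [← Equiv.prod_comp σ (fun j => X j ^ (C.wt (τ b) ((j : ℕ) + 1)).toNat)]
    apply Finset.prod_congr rfl
    intro j _
    congr 1
    have hwt := (sigma_main hC hi1 hi2 b).1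
    rcases eq_or_ne j a with hja | hja
    · have h1 := hwt (i+1)
      rw [if_neg (by omega), if_pos rfl] at h1
      rw [hja, show σ a = a' from Equiv.swap_apply_left _ _]
      have e1 : ((a' : ℕ)) + 1 = i + 1 := rfl
      rw [e1, h1]
    · rcases eq_or_ne j a' with hja' | hja'
      · have h1 := hwt i
        rw [if_pos rfl] at h1
        rw [hja', show σ a' = a from Equiv.swap_apply_right _ _]
        have e1 : ((a' : ℕ)) + 1 = i + 1 := rfl
        rw [e1, show ((a:ℕ)) + 1 = i from rfl, h1]
      · have hne1 : (j:ℕ)+1 ≠ i := by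
          intro h; apply hja; apply Fin.ext; omega
        have hne2 : (j:ℕ)+1 ≠ i+1 := by
          intro h; apply hja'; apply Fin.ext; show (j:ℕ) = (a:ℕ)+1; omega
        have h1 := hwt ((j:ℕ)+1)
        rw [if_neg hne1, if_neg hne2] at h1
        rw [show σ j = j from Equiv.swap_apply_of_ne_of_ne hja hja', h1]
  rw [Finset.sum_congr rfl (fun b _ => key b)]
  exact hτ.bijective.sum_comp (cmon C)

lemma char_symm (hC : IsGL C) (hn : 1 ≤ n) : (char C).IsSymmetric := by
  obtain ⟨m, rfl⟩ : ∃ m, n = m + 1 := ⟨n - 1, by omega⟩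
  intro e
  let M : Submonoid (Equiv.Perm (Fin (m+1))) :=
    { carrier := {σ | rename ⇑σ (char C) = char C}
      one_mem' := by
        show rename ⇑(1 : Equiv.Perm (Fin (m+1))) (char C) = char C
        rw [show ⇑(1 : Equiv.Perm (Fin (m+1))) = id from rfl, rename_id, AlgHom.id_apply]
      mul_mem' := by
        intro σ1 σ2 h1 h2
        show rename ⇑(σ1 * σ2) (char C) = char C
        rw [show ⇑(σ1 * σ2) = ⇑σ1 ∘ ⇑σ2 from rfl, ← rename_rename, h2, h1] }
  have hle : Submonoid.closure
      (Set.range fun i : Fin m => Equiv.swap i.castSucc i.succ) ≤ M := by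
    rw [Submonoid.closure_le]
    rintro _ ⟨i, rfl⟩
    show rename ⇑(Equiv.swap i.castSucc i.succ) (char C) = char C
    have hlt : ((i.castSucc : Fin (m+1)) : ℕ) + 2 ≤ m + 1 := by
      have := i.isLt
      rw [Fin.coe_castSucc]
      omega
    have hsw : i.succ = (⟨((i.castSucc : Fin (m+1)) : ℕ) + 1, by omega⟩ : Fin (m+1)) := by
      apply Fin.ext; rfl
    rw [hsw]
    exact rename_adj hC i.castSucc hlt
  have htop := Equiv.Perm.mclosure_swap_castSucc_succ m
  rw [htop] at hle
  exact hle (Submonoid.mem_top e)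

end SymPart

section Part3
open Crystal MvPolynomial
variable {n : ℕ} {B : Type} [Fintype B] {C : Crystal n B}

lemma exch0 (hC : IsQPlus C) (b c : B) (hb : C.wt b 1 ≠ 0) (h : C.e0 b = some c) :
    (∀ j, C.wt c j = C.wt b j) ∧ C.e0 c = none ∧ C.f0 c = some b ∧ C.f0 b = none := by
  have hw := (hC.e0_wt b c h).1
  have hf : C.f0 c = some b := (hC.zero_iff b c).mp h
  have hzb := hC.zero_string b
  rw [if_neg hb] at hzb
  have hzc := hC.zero_string c
  rw [if_neg (by rw [hw 1]; exact hb)] at hzc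
  have he1 : C.eps0 b ≠ 0 := fun h0 => by
    have h2 := (clen_eq_zero C.e0 b (hC.e0_bdd b)).mp h0
    rw [h] at h2; exact nomatch h2
  have hp1 : C.phi0 c ≠ 0 := fun h0 => by
    have h2 := (clen_eq_zero C.f0 c (hC.f0_bdd c)).mp h0
    rw [hf] at h2; exact nomatch h2
  have hec : C.e0 c = none := by
    have h3 : C.eps0 c = 0 := by omega
    exact (clen_eq_zero C.e0 c (hC.e0_bdd c)).mp h3
  have hfb : C.f0 b = none := by
    have h3 : C.phi0 b = 0 := by omega
    exact (clen_eq_zero C.f0 b (hC.f0_bdd b)).mp h3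
  exact ⟨hw, hec, hf, hfb⟩

lemma exch0' (hC : IsQPlus C) (b : B) (hb : C.wt b 1 ≠ 0) (he : C.e0 b = none) :
    ∃ c, C.f0 b = some c := by
  have hzb := hC.zero_string b
  rw [if_neg hb] at hzb
  have he0 : C.eps0 b = 0 := (clen_eq_zero C.e0 b (hC.e0_bdd b)).mpr he
  have hp : C.phi0 b ≠ 0 := by omega
  cases hf : C.f0 b with
  | none => exact absurd ((clen_eq_zero C.f0 b (hC.f0_bdd b)).mpr hf) hp
  | some c => exact ⟨c, rfl⟩

lemma part3 (hn : 1 ≤ n) (hC : IsQPlus C) :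
    ∃ h : MvPolynomial (Fin n) ℤ,
      char C - (aeval (fun i : Fin n =>
          if (i : ℕ) = 0 then 0 else X i) (char C) : MvPolynomial (Fin n) ℤ) =
        MvPolynomial.C 2 * X (⟨0, by omega⟩ : Fin n) * h := by
  classical
  set i0 : Fin n := ⟨0, by omega⟩ with hi0
  set g3 : Fin n → MvPolynomial (Fin n) ℤ := fun i => if (i : ℕ) = 0 then 0 else X i with hg3
  have hA : ∀ b : B, (aeval g3) (cmon C b) = if C.wt b 1 = 0 then cmon C b else 0 := by
    intro b
    rw [cmon, map_prod]
    by_cases hb : C.wt b 1 = 0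
    · rw [if_pos hb]
      apply Finset.prod_congr rfl
      intro j _
      rw [map_pow, aeval_X]
      rcases eq_or_ne ((j:ℕ)) 0 with hj0 | hj0
      · have hji : j = i0 := Fin.ext hj0
        rw [hji, show ((i0:ℕ)) + 1 = 1 from rfl, hb]
        norm_num
      · have : g3 j = X j := by rw [hg3]; simp [hj0]
        rw [this]
    · rw [if_neg hb]
      apply Finset.prod_eq_zero (Finset.mem_univ i0)
      have hd : 1 ≤ (C.wt b ((i0:ℕ)+1)).toNat := by
        have h2 := hC.wt_nonneg b 1
        show 1 ≤ (C.wt b 1).toNat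
        omega
      rw [map_pow, aeval_X, show g3 i0 = 0 from by rw [hg3]; simp [hi0]]
      exact zero_pow (by omega)
  set R : B → MvPolynomial (Fin n) ℤ :=
    fun b => ∏ j ∈ Finset.univ.erase i0, X j ^ (C.wt b ((j:ℕ)+1)).toNat with hR
  have hsplit : ∀ b, cmon C b = X i0 ^ (C.wt b ((i0:ℕ)+1)).toNat * R b :=
    fun b => (Finset.mul_prod_erase _ _ (Finset.mem_univ i0)).symm
  have step1 : char C - (aeval g3) (char C) =
      ∑ b ∈ Finset.univ.filter (fun b => C.wt b 1 ≠ 0), cmon C b := by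
    rw [char_eq, map_sum, ← Finset.sum_sub_distrib, Finset.sum_filter]
    apply Finset.sum_congr rfl
    intro b _
    rw [hA b]
    by_cases hb : C.wt b 1 = 0
    · rw [if_pos hb, if_neg (by simp [hb])]
      ring
    · rw [if_neg hb, if_pos hb]
      ring
  set sE := Finset.univ.filter (fun b => C.wt b 1 ≠ 0 ∧ C.e0 b ≠ none) with hsE
  set sF := Finset.univ.filter (fun b => C.wt b 1 ≠ 0 ∧ ¬ C.e0 b ≠ none) with hsF
  have hsplitS : ∑ b ∈ Finset.univ.filter (fun b => C.wt b 1 ≠ 0), cmon C b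
      = ∑ b ∈ sE, cmon C b + ∑ b ∈ sF, cmon C b := by
    rw [hsE, hsF, ← Finset.sum_filter_add_sum_filter_not
      (Finset.univ.filter (fun b => C.wt b 1 ≠ 0)) (fun b => C.e0 b ≠ none),
      Finset.filter_filter, Finset.filter_filter]
  have hpair : ∑ b ∈ sE, cmon C b = ∑ b ∈ sF, cmon C b := by
    refine Finset.sum_nbij' (fun b => C.sigma0 b) (fun b => C.sigma0 b) ?_ ?_ ?_ ?_ ?_
    · intro b hb
      rw [hsE, Finset.mem_filter] at hb
      obtain ⟨-, hb1, hb2⟩ := hb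
      cases h : C.e0 b with
      | none => exact absurd h hb2
      | some c =>
        obtain ⟨hw, hec, hfc, -⟩ := exch0 hC b c hb1 h
        have hs0 : C.sigma0 b = c := by simp [Crystal.sigma0, h]
        show C.sigma0 b ∈ sF
        rw [hs0, hsF, Finset.mem_filter]
        exact ⟨Finset.mem_univ _, by rw [hw 1]; exact hb1, by simp [hec]⟩
    · intro b hb
      rw [hsF, Finset.mem_filter] at hb
      obtain ⟨-, hb1, hb2⟩ := hb
      have he : C.e0 b = none := by by_contra h; exact hb2 h
      obtain ⟨c, hc⟩ := exch0' hC b hb1 he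
      have hcb : C.e0 c = some b := (hC.zero_iff c b).mpr hc
      have hwcb := (hC.e0_wt c b hcb).1
      have hc1 : C.wt c 1 ≠ 0 := by rw [← hwcb 1]; exact hb1
      have hs0 : C.sigma0 b = c := by simp [Crystal.sigma0, he, hc]
      show C.sigma0 b ∈ sE
      rw [hs0, hsE, Finset.mem_filter]
      exact ⟨Finset.mem_univ _, hc1, by simp [hcb]⟩
    · intro b hb
      rw [hsE, Finset.mem_filter] at hb
      obtain ⟨-, hb1, hb2⟩ := hb
      cases h : C.e0 b with
      | none => exact absurd h hb2
      | some c =>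
        obtain ⟨hw, hec, hfc, -⟩ := exch0 hC b c hb1 h
        have h1 : C.sigma0 b = c := by simp [Crystal.sigma0, h]
        have h2 : C.sigma0 c = b := by simp [Crystal.sigma0, hec, hfc]
        show C.sigma0 (C.sigma0 b) = b
        rw [h1, h2]
    · intro b hb
      rw [hsF, Finset.mem_filter] at hb
      obtain ⟨-, hb1, hb2⟩ := hb
      have he : C.e0 b = none := by by_contra h; exact hb2 h
      obtain ⟨c, hc⟩ := exch0' hC b hb1 he
      have hcb : C.e0 c = some b := (hC.zero_iff c b).mpr hc
      have h1 : C.sigma0 b = c := by simp [Crystal.sigma0, he, hc]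
      have h2 : C.sigma0 c = b := by simp [Crystal.sigma0, hcb]
      show C.sigma0 (C.sigma0 b) = b
      rw [h1, h2]
    · intro b hb
      rw [hsE, Finset.mem_filter] at hb
      obtain ⟨-, hb1, hb2⟩ := hb
      cases h : C.e0 b with
      | none => exact absurd h hb2
      | some c =>
        obtain ⟨hw, -, -, -⟩ := exch0 hC b c hb1 h
        have h1 : C.sigma0 b = c := by simp [Crystal.sigma0, h]
        show cmon C b = cmon C (C.sigma0 b)
        rw [h1, cmon, cmon]
        apply Finset.prod_congr rfl
        intro j _
        rw [hw ((j:ℕ)+1)]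
  refine ⟨∑ b ∈ sE, X i0 ^ ((C.wt b 1).toNat - 1) * R b, ?_⟩
  have hC2 : (MvPolynomial.C (2:ℤ) : MvPolynomial (Fin n) ℤ) = 2 := by
    norm_num
  have hterm : ∀ b ∈ sE,
      MvPolynomial.C (2:ℤ) * X i0 * (X i0 ^ ((C.wt b 1).toNat - 1) * R b)
        = cmon C b + cmon C b := by
    intro b hb
    rw [hsE, Finset.mem_filter] at hb
    have hd1 : 1 ≤ (C.wt b 1).toNat := by
      have h2 := hC.wt_nonneg b 1
      have h3 := hb.2.1
      omega
    rw [hsplit b]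
    show MvPolynomial.C (2:ℤ) * X i0 * (X i0 ^ ((C.wt b 1).toNat - 1) * R b)
      = X i0 ^ (C.wt b 1).toNat * R b + X i0 ^ (C.wt b 1).toNat * R b
    obtain ⟨k, hk⟩ : ∃ k, (C.wt b 1).toNat = k + 1 := ⟨(C.wt b 1).toNat - 1, by omega⟩
    rw [hk, Nat.add_sub_cancel, hC2]
    ring
  rw [step1, hsplitS, ← hpair, Finset.mul_sum, Finset.sum_congr rfl hterm,
    Finset.sum_add_distrib]

end Part3

section Part2
open Crystal MvPolynomial
variable {n : ℕ} {B : Type} [Fintype B] {C : Crystal n B}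

noncomputable def sbar (C : Crystal n B) (b : B) : B := (C.ebar b).getD ((C.fbar b).getD b)

omit [Fintype B] in
lemma exchbar (hC : IsQPlus C) (hn2 : 2 ≤ n) (b c : B) (h : C.ebar b = some c) :
    (∀ j, C.wt c j = C.wt b j + (if j = 1 then 1 else 0) - (if j = 2 then 1 else 0)) ∧
    C.ebar c = none ∧ C.fbar c = some b := by
  have hw := (hC.ebar_wt hn2 b c h).1
  have hf : C.fbar c = some b := (hC.bar_iff b c).mp h
  have hc1 : C.wt c 1 ≠ 0 := by
    have h0 := hC.wt_nonneg b 1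
    have h2 := hw 1
    rw [if_pos rfl, if_neg (by omega)] at h2
    omega
  have hzc := hC.bar_string hn2 c
  rw [if_neg (by intro hcc; exact hc1 hcc.1)] at hzc
  have hp1 : C.phiBar c ≠ 0 := fun h0 => by
    have h2 := (clen_eq_zero C.fbar c (hC.fbar_bdd c)).mp h0
    rw [hf] at h2; exact nomatch h2
  have hec : C.ebar c = none := by
    have h3 : C.epsBar c = 0 := by omega
    exact (clen_eq_zero C.ebar c (hC.ebar_bdd c)).mp h3
  exact ⟨hw, hec, hf⟩

omit [Fintype B] in
lemma exchbar' (hC : IsQPlus C) (hn2 : 2 ≤ n) (b : B)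
    (hb : ¬(C.wt b 1 = 0 ∧ C.wt b 2 = 0)) (he : C.ebar b = none) :
    ∃ c, C.fbar b = some c := by
  have hzb := hC.bar_string hn2 b
  rw [if_neg hb] at hzb
  have he0 : C.epsBar b = 0 := (clen_eq_zero C.ebar b (hC.ebar_bdd b)).mpr he
  cases hfb : C.fbar b with
  | none =>
    exfalso
    have hp0 : C.phiBar b = 0 := (clen_eq_zero C.fbar b (hC.fbar_bdd b)).mpr hfb
    omega
  | some c => exact ⟨c, rfl⟩

lemma part2 (hn2 : 2 ≤ n) (hC : IsQPlus C) :
    (aeval (fun i : Fin n => if (i : ℕ) = 1 then -(X (⟨0, by omega⟩ : Fin n))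
        else X i) (char C) : MvPolynomial (Fin n) ℤ) ∈
      supported ℤ {i : Fin n | 2 ≤ (i : ℕ)} := by
  classical
  set i0 : Fin n := ⟨0, by omega⟩ with hi0
  set i1 : Fin n := ⟨1, by omega⟩ with hi1
  set g2 : Fin n → MvPolynomial (Fin n) ℤ :=
    fun i => if (i : ℕ) = 1 then -(X i0) else X i with hg2
  have hg2i0 : g2 i0 = X i0 := by rw [hg2]; simp [hi0]
  have hg2i1 : g2 i1 = -(X i0) := by rw [hg2]; simp [hi1]
  have hi01 : i1 ≠ i0 := by
    intro h; rw [hi0, hi1] at h; exact absurd (congrArg Fin.val h) (by simp)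
  have hsplit2 : ∀ F : Fin n → MvPolynomial (Fin n) ℤ,
      ∏ j : Fin n, F j = F i0 * (F i1 * ∏ j ∈ (Finset.univ.erase i0).erase i1, F j) := by
    intro F
    rw [Finset.mul_prod_erase _ F (Finset.mem_erase.mpr ⟨hi01, Finset.mem_univ _⟩),
      Finset.mul_prod_erase _ F (Finset.mem_univ i0)]
  set S0 := Finset.univ.filter (fun b => (C.wt b 1 = 0 ∧ C.wt b 2 = 0)) with hS0
  set S := Finset.univ.filter (fun b => ¬(C.wt b 1 = 0 ∧ C.wt b 2 = 0)) with hS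
  have hsum : (aeval g2) (char C) =
      (∑ b ∈ S0, (aeval g2) (cmon C b)) + ∑ b ∈ S, (aeval g2) (cmon C b) := by
    rw [char_eq, map_sum, hS0, hS, Finset.sum_filter_add_sum_filter_not]
  have hSzero : ∑ b ∈ S, (aeval g2) (cmon C b) = 0 := by
    set sE := Finset.univ.filter
      (fun b => ¬(C.wt b 1 = 0 ∧ C.wt b 2 = 0) ∧ C.ebar b ≠ none) with hsE
    set sF := Finset.univ.filter
      (fun b => ¬(C.wt b 1 = 0 ∧ C.wt b 2 = 0) ∧ ¬ C.ebar b ≠ none) with hsF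
    have hsplitS : ∑ b ∈ S, (aeval g2) (cmon C b)
        = ∑ b ∈ sE, (aeval g2) (cmon C b) + ∑ b ∈ sF, (aeval g2) (cmon C b) := by
      rw [hS, hsE, hsF, ← Finset.sum_filter_add_sum_filter_not
        (Finset.univ.filter (fun b => ¬(C.wt b 1 = 0 ∧ C.wt b 2 = 0)))
        (fun b => C.ebar b ≠ none), Finset.filter_filter, Finset.filter_filter]
    have hmemE : ∀ b ∈ sE, ∃ c, C.ebar b = some c ∧ sbar C b = c := by
      intro b hb
      rw [hsE, Finset.mem_filter] at hb
      cases h : C.ebar b with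
      | none => exact absurd h hb.2.2
      | some c => exact ⟨c, rfl, by simp [sbar, h]⟩
    have hmemF : ∀ b ∈ sF, ∃ c, C.fbar b = some c ∧ C.ebar b = none ∧ sbar C b = c := by
      intro b hb
      rw [hsF, Finset.mem_filter] at hb
      have he : C.ebar b = none := by by_contra h; exact hb.2.2 h
      obtain ⟨c, hc⟩ := exchbar' hC hn2 b hb.2.1 he
      exact ⟨c, hc, he, by simp [sbar, he, hc]⟩
    have hpair : ∑ b ∈ sF, (aeval g2) (cmon C b)
        = ∑ b ∈ sE, (aeval g2) (cmon C (sbar C b)) := by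
      refine Finset.sum_nbij' (sbar C) (sbar C) ?_ ?_ ?_ ?_ ?_
      · intro b hb
        obtain ⟨c, hc, he, hs⟩ := hmemF b hb
        rw [hsF, Finset.mem_filter] at hb
        have hcb : C.ebar c = some b := (hC.bar_iff c b).mpr hc
        obtain ⟨hw, -, -⟩ := exchbar hC hn2 c b hcb
        have hc1 : ¬(C.wt c 1 = 0 ∧ C.wt c 2 = 0) := by
          intro hcc
          apply hb.2.1
          have h1 := hw 1
          have h2 := hw 2
          rw [if_pos rfl, if_neg (by omega)] at h1
          rw [if_neg (by omega), if_pos rfl] at h2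
          have := hC.wt_nonneg b 2
          constructor <;> omega
        show sbar C b ∈ sE
        rw [hs, hsE, Finset.mem_filter]
        exact ⟨Finset.mem_univ _, hc1, by simp [hcb]⟩
      · intro b hb
        obtain ⟨c, hc, hs⟩ := hmemE b hb
        obtain ⟨hw, hec, hfc⟩ := exchbar hC hn2 b c hc
        have hc1 : C.wt c 1 ≠ 0 := by
          have h1 := hw 1
          rw [if_pos rfl, if_neg (by omega)] at h1
          have := hC.wt_nonneg b 1
          omega
        show sbar C b ∈ sF
        rw [hs, hsF, Finset.mem_filter]
        exact ⟨Finset.mem_univ _, by intro hcc; exact hc1 hcc.1, by simp [hec]⟩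
      · intro b hb
        obtain ⟨c, hc, he, hs⟩ := hmemF b hb
        have hcb : C.ebar c = some b := (hC.bar_iff c b).mpr hc
        show sbar C (sbar C b) = b
        rw [hs]
        simp [sbar, hcb]
      · intro b hb
        obtain ⟨c, hc, hs⟩ := hmemE b hb
        obtain ⟨-, hec, hfc⟩ := exchbar hC hn2 b c hc
        show sbar C (sbar C b) = b
        rw [hs]
        simp [sbar, hec, hfc]
      · intro b hb
        obtain ⟨c, hc, he, hs⟩ := hmemF b hb
        have hcb : C.ebar c = some b := (hC.bar_iff c b).mpr hc
        have hss : sbar C (sbar C b) = b := by rw [hs]; simp [sbar, hcb]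
        show (aeval g2) (cmon C b) = (aeval g2) (cmon C (sbar C (sbar C b)))
        rw [hss]
    have hcancel : ∀ b ∈ sE,
        (aeval g2) (cmon C b) + (aeval g2) (cmon C (sbar C b)) = 0 := by
      intro b hb
      obtain ⟨c, hc, hs⟩ := hmemE b hb
      obtain ⟨hw, -, -⟩ := exchbar hC hn2 b c hc
      rw [hs]
      set d : Fin n → ℕ := fun j => (C.wt b ((j:ℕ)+1)).toNat with hd
      set d' : Fin n → ℕ := fun j => (C.wt c ((j:ℕ)+1)).toNat with hd'
      have hab : (aeval g2) (cmon C b) = ∏ j : Fin n, g2 j ^ d j := by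
        rw [cmon, map_prod]; apply Finset.prod_congr rfl; intro j _; rw [map_pow, aeval_X]
      have hac : (aeval g2) (cmon C c) = ∏ j : Fin n, g2 j ^ d' j := by
        rw [cmon, map_prod]; apply Finset.prod_congr rfl; intro j _; rw [map_pow, aeval_X]
      have h1 := hw 1
      rw [if_pos rfl, if_neg (by omega)] at h1
      have h2 := hw 2
      rw [if_neg (by omega), if_pos rfl] at h2
      have hnn1 := hC.wt_nonneg b 1
      have hnn2 := hC.wt_nonneg c 2
      have hd0 : d' i0 = d i0 + 1 := by
        rw [hd, hd']
        show (C.wt c ((i0:ℕ)+1)).toNat = (C.wt b ((i0:ℕ)+1)).toNat + 1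
        rw [show ((i0:ℕ)) + 1 = 1 from rfl]
        omega
      have hd1 : d i1 = d' i1 + 1 := by
        rw [hd, hd']
        show (C.wt b ((i1:ℕ)+1)).toNat = (C.wt c ((i1:ℕ)+1)).toNat + 1
        rw [show ((i1:ℕ)) + 1 = 2 from rfl]
        omega
      have hrest : ∀ j ∈ (Finset.univ.erase i0).erase i1, g2 j ^ d' j = g2 j ^ d j := by
        intro j hj
        rw [Finset.mem_erase, Finset.mem_erase] at hj
        have hj1 : (j:ℕ) ≠ 1 := fun h => hj.1 (Fin.ext h)
        have hj0 : (j:ℕ) ≠ 0 := fun h => hj.2.1 (Fin.ext h)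
        have hwj := hw ((j:ℕ)+1)
        rw [if_neg (by omega), if_neg (by omega)] at hwj
        rw [hd, hd']
        show g2 j ^ (C.wt c ((j:ℕ)+1)).toNat = g2 j ^ (C.wt b ((j:ℕ)+1)).toNat
        rw [hwj]
        norm_num
      rw [hab, hac, hsplit2 (fun j => g2 j ^ d j), hsplit2 (fun j => g2 j ^ d' j),
        Finset.prod_congr rfl hrest, hg2i0, hg2i1, hd0, hd1]
      ring
    rw [hsplitS, hpair, ← Finset.sum_add_distrib,
      Finset.sum_congr rfl hcancel, Finset.sum_const_zero]
  rw [hsum, hSzero, add_zero]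
  apply Subalgebra.sum_mem
  intro b hb
  rw [hS0, Finset.mem_filter] at hb
  obtain ⟨-, hb1, hb2⟩ := hb
  rw [cmon, map_prod]
  apply Subalgebra.prod_mem
  intro j _
  rw [map_pow, aeval_X]
  rcases eq_or_ne ((j:ℕ)) 0 with hj | hj
  · have hz : (C.wt b ((j:ℕ)+1)).toNat = 0 := by simp [hj, hb1]
    rw [hz, pow_zero]; exact one_mem _
  · rcases eq_or_ne ((j:ℕ)) 1 with hj1 | hj1
    · have hz : (C.wt b ((j:ℕ)+1)).toNat = 0 := by
        rw [hj1]
        show (C.wt b 2).toNat = 0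
        simp [hb2]
      rw [hz, pow_zero]; exact one_mem _
    · have hg : g2 j = X j := by rw [hg2]; simp [hj1]
      rw [hg]
      apply pow_mem
      rw [MvPolynomial.X_mem_supported]
      show 2 ≤ (j:ℕ)
      omega

end Part2
/-- The character of a finite `q⁺_n`-crystal lies in `Sym_Q(x_1,…,x_n)`:
it is symmetric, the substitution `x_2 ↦ -x_1` kills the variables `x_1, x_2` (when `n ≥ 2`),
and `f - f(0,x_2,…,x_n)` is divisible by `2 x_1`. -/
theorem char_mem_SymQ (n : ℕ) (hn : 1 ≤ n) {B : Type} [Fintype B] (C : Crystal n B)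
    (hC : IsQPlus C) :
    (char C).IsSymmetric ∧
    (2 ≤ n →
      (MvPolynomial.aeval (fun i : Fin n =>
          if (i : ℕ) = 1 then -(MvPolynomial.X (⟨0, by omega⟩ : Fin n))
          else MvPolynomial.X i) (char C) : MvPolynomial (Fin n) ℤ) ∈
        MvPolynomial.supported ℤ {i : Fin n | 2 ≤ (i : ℕ)}) ∧
    (∃ h : MvPolynomial (Fin n) ℤ,
      char C - (MvPolynomial.aeval (fun i : Fin n =>
          if (i : ℕ) = 0 then 0 else MvPolynomial.X i) (char C) : MvPolynomial (Fin n) ℤ) =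
        MvPolynomial.C 2 * MvPolynomial.X (⟨0, by omega⟩ : Fin n) * h) := by
  exact ⟨char_symm hC.toIsQ.toIsGL hn, fun h2 => part2 h2 hC, part3 hn hC⟩

end QPaper
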